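/- For integers 1 ≤ r ≤ s ≤ t with t ≥ 2, the robust chromatic number χ₁(K_{r,s,t}) equals 2 if r ≤ 2, and equals 3 if r ≥ 3. -/

import Mathlib

open Finset

/-- The support of a vector: indices of nonzero entries. -/
def qsupport {n : ℕ} (x : Fin n → ℕ) : Finset (Fin n) :=
  Finset.univ.filter (fun i => x i ≠ 0)

/-- `Qset q n` : all q-edges, i.e. vectors in `{0,…,q}^n` with exactly two nonzero entries. -/
def Qset (q n : ℕ) : Finset (Fin n → ℕ) :=
  ((Finset.univ : Finset (Fin n → Fin (q+1))).image (fun f i => (f i : ℕ))).filter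
    (fun x => (qsupport x).card = 2)

/-- The q-edge with support `{i,j}`, value `a` at `i` and `b` at `j`. -/
def qedge {n : ℕ} (i j : Fin n) (a b : ℕ) : Fin n → ℕ :=
  fun k => if k = i then a else if k = j then b else 0

/-- `H` is an `s`-copy of the graph `F`. -/
def IsSCopy {α : Type} [Fintype α] (s : ℕ) (F : SimpleGraph α) {n : ℕ}
    (H : Finset (Fin n → ℕ)) : Prop :=
  ∃ ι : α → Fin n, Function.Injective ι ∧
    (∀ u v : α, F.Adj u v ↔ ∃ x ∈ H, qsupport x = {ι u, ι v}) ∧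
    H.card = Nat.card F.edgeSet ∧
    ∀ x ∈ H, ∀ y ∈ H, x ≠ y → ∀ i, x i ≠ 0 → y i ≠ 0 → s ≤ x i + y i

/-- `H` contains an `s`-copy of `F`. -/
def ContainsSCopy {α : Type} [Fintype α] (s : ℕ) (F : SimpleGraph α) {n : ℕ}
    (H : Finset (Fin n → ℕ)) : Prop :=
  ∃ H' ⊆ H, IsSCopy s F H'

/-- The ordinary Turán number `ex(n,F)`. -/
noncomputable def exNum {α : Type} [Fintype α] (n : ℕ) (F : SimpleGraph α) : ℕ :=
  sSup {m | ∃ G : SimpleGraph (Fin n),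
    (¬ ∃ φ : F →g G, Function.Injective φ) ∧ m = Nat.card G.edgeSet}

/-- The Turán number `ex(n,F,q,s)`. -/
noncomputable def exQ {α : Type} [Fintype α] (n : ℕ) (F : SimpleGraph α) (q s : ℕ) : ℕ :=
  sSup {m | ∃ H ⊆ Qset q n, ¬ ContainsSCopy s F H ∧ m = H.card}

/-- A 1-selection of `F`: each vertex is assigned an edge of `F` containing it. -/
def OneSelection {α : Type} (F : SimpleGraph α) (f : α → Sym2 α) : Prop :=
  ∀ v, f v ∈ F.edgeSet ∧ v ∈ f v

/-- The robust chromatic number `χ₁(F)`: the minimum chromatic number of a 1-removed graph. -/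
noncomputable def robustChrom {α : Type} (F : SimpleGraph α) : ℕ∞ :=
  ⨅ f : {f : α → Sym2 α // OneSelection F f},
    (F.deleteEdges (Set.range f.1)).chromaticNumber

/-- Index of the part of a vertex of the complete tripartite graph. -/
def partIdx {r s t : ℕ} : Fin r ⊕ Fin s ⊕ Fin t → Fin 3
  | Sum.inl _ => 0
  | Sum.inr (Sum.inl _) => 1
  | Sum.inr (Sum.inr _) => 2

/-- The complete tripartite graph `K_{r,s,t}`. -/
def K3part (r s t : ℕ) : SimpleGraph (Fin r ⊕ Fin s ⊕ Fin t) :=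
  SimpleGraph.fromRel (fun u v => partIdx u ≠ partIdx v)

lemma prodlem {x y : ℕ} (hx : 3 ≤ x) (h : x*y ≤ x + y) : y ≤ 1 := by
  by_contra hy
  push_neg at hy
  have h1 : x * 2 ≤ x * y := Nat.mul_le_mul_left x hy
  have h2 : 3 * y ≤ x * y := Nat.mul_le_mul_right y hx
  omega

lemma classify {x y z : ℕ} (h : x*y + x*z + y*z ≤ x + y + z) :
    (x = 1 ∧ y = 1 ∧ z = 1) ∨ x = 0 ∨ y = 0 ∨ z = 0 := by
  by_contra hc
  push_neg at hc
  obtain ⟨h1, hx, hy, hz⟩ := hc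
  have hx1 : 1 ≤ x := Nat.pos_of_ne_zero hx
  have hy1 : 1 ≤ y := Nat.pos_of_ne_zero hy
  have hz1 : 1 ≤ z := Nat.pos_of_ne_zero hz
  have key : ∀ a b c : ℕ, 1 ≤ a → 1 ≤ b → 2 ≤ c → ¬ (a*b + a*c + b*c ≤ a + b + c) := by
    intro a b c ha hb hc2
    have e1 : b ≤ a*b := Nat.le_mul_of_pos_left b ha
    have e2 : a * 2 ≤ a * c := Nat.mul_le_mul_left a hc2
    have e3 : c ≤ b*c := Nat.le_mul_of_pos_left c hb
    omega
  -- one of x,y,z ≥ 2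
  rcases Nat.lt_or_ge x 2 with h2 | h2
  · rcases Nat.lt_or_ge y 2 with h3 | h3
    · rcases Nat.lt_or_ge z 2 with h4 | h4
      · omega
      · exact key x y z hx1 hy1 h4 h
    · exact key x z y hx1 hz1 h3 (by linarith [Nat.mul_comm y z, Nat.mul_comm x y])
  · exact key y z x hy1 hz1 h2 (by linarith [Nat.mul_comm x y, Nat.mul_comm x z])

lemma arith {a b c a' b' c' : ℕ} (ha : 3 ≤ a + a') (hb : 3 ≤ b + b') (hc : 3 ≤ c + c')
    (h0 : a*b + a*c + b*c ≤ a + b + c) (h1 : a'*b' + a'*c' + b'*c' ≤ a' + b' + c') : False := by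
  have zmain : ∀ x y z x' y' z' : ℕ, 3 ≤ x + x' → 3 ≤ y + y' → 3 ≤ z + z' →
      x*y + x*z + y*z ≤ x + y + z → x'*y' + x'*z' + y'*z' ≤ x' + y' + z' →
      x = 0 → y' = 0 → False := by
    intro x y z x' y' z' hx hy hz g0 g1 hx0 hy0
    subst hx0 hy0
    simp at g0 g1
    have hz1 : z ≤ 1 := prodlem (by omega) g0
    have hz2 : z' ≤ 1 := prodlem (by omega : 3 ≤ x') g1
    omega
  rcases classify h0 with h111 | hA | hB | hC
  · -- a=b=c=1, so a',b',c' ≥ 2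
    rcases classify h1 with h111' | hA' | hB' | hC' <;> omega
  · rcases classify h1 with h111' | hA' | hB' | hC'
    · omega
    · omega
    · exact zmain a b c a' b' c' ha hb hc h0 h1 hA hB'
    · exact zmain a c b a' c' b' ha hc hb (by linarith [Nat.mul_comm b c]) (by linarith [Nat.mul_comm b' c']) hA hC'
  · rcases classify h1 with h111' | hA' | hB' | hC'
    · omega
    · exact zmain b a c b' a' c' hb ha hc (by linarith [Nat.mul_comm a b]) (by linarith [Nat.mul_comm a' b']) hB hA'
    · omega
    · exact zmain b c a b' c' a' hb hc ha (by linarith [Nat.mul_comm a b, Nat.mul_comm a c]) (by linarith [Nat.mul_comm a' b', Nat.mul_comm a' c']) hB hC'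
  · rcases classify h1 with h111' | hA' | hB' | hC'
    · omega
    · exact zmain c a b c' a' b' hc ha hb (by linarith [Nat.mul_comm a c, Nat.mul_comm b c]) (by linarith [Nat.mul_comm a' c', Nat.mul_comm b' c']) hC hA'
    · exact zmain c b a c' b' a' hc hb ha (by linarith [Nat.mul_comm a c, Nat.mul_comm b c, Nat.mul_comm a b]) (by linarith [Nat.mul_comm a' c', Nat.mul_comm b' c', Nat.mul_comm a' b']) hC hB'
    · omega


lemma K3part_adj {r s t : ℕ} (u v : Fin r ⊕ Fin s ⊕ Fin t) :
    (K3part r s t).Adj u v ↔ partIdx u ≠ partIdx v := by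
  constructor
  · rintro ⟨hne, h | h⟩
    · exact h
    · exact h.symm
  · intro h
    exact ⟨fun he => h (he ▸ rfl), Or.inl h⟩


lemma part_triple {r s t : ℕ} (v : Fin r ⊕ Fin s ⊕ Fin t) :
    partIdx v = 0 ∨ partIdx v = 1 ∨ partIdx v = 2 := by
  rcases v with a | b | cc
  · exact Or.inl rfl
  · exact Or.inr (Or.inl rfl)
  · exact Or.inr (Or.inr rfl)

lemma no_two_coloring {r s t : ℕ} (hr : 3 ≤ r) (hs : 3 ≤ s) (ht : 3 ≤ t)
    {f : (Fin r ⊕ Fin s ⊕ Fin t) → Sym2 (Fin r ⊕ Fin s ⊕ Fin t)}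
    (hf : OneSelection (K3part r s t) f)
    (c : ((K3part r s t).deleteEdges (Set.range f)).Coloring (Fin 2)) : False := by
  classical
  have hdel : ∀ u v : Fin r ⊕ Fin s ⊕ Fin t, partIdx u ≠ partIdx v → c u = c v →
      s(u,v) ∈ Set.range f := by
    intro u v hp hc
    by_contra hmem
    have hadj : ((K3part r s t).deleteEdges (Set.range f)).Adj u v := by
      rw [SimpleGraph.deleteEdges_adj]
      exact ⟨(K3part_adj u v).2 hp, hmem⟩
    exact (c.valid hadj) hc
  set A : Fin 3 → Fin 2 → Finset (Fin r ⊕ Fin s ⊕ Fin t) :=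
    fun i ε => univ.filter (fun v => partIdx v = i ∧ c v = ε) with hA
  set n : Fin 3 → Fin 2 → ℕ := fun i ε => (A i ε).card with hn
  -- key inequality per color
  have keyQ : ∀ ε : Fin 2,
      n 0 ε * n 1 ε + n 0 ε * n 2 ε + n 1 ε * n 2 ε ≤ n 0 ε + n 1 ε + n 2 ε := by
    intro ε
    set Q : Finset ((Fin r ⊕ Fin s ⊕ Fin t) × (Fin r ⊕ Fin s ⊕ Fin t)) :=
      (A 0 ε ×ˢ A 1 ε) ∪ (A 0 ε ×ˢ A 2 ε) ∪ (A 1 ε ×ˢ A 2 ε) with hQ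
    have hmemQ : ∀ p ∈ Q, ((partIdx p.1 : Fin 3) : ℕ) < ((partIdx p.2 : Fin 3) : ℕ)
        ∧ c p.1 = ε ∧ c p.2 = ε := by
      intro p hp
      simp only [hQ, mem_union, mem_product, hA, mem_filter] at hp
      rcases hp with (⟨⟨_,h1,h2⟩,⟨_,h3,h4⟩⟩|⟨⟨_,h1,h2⟩,⟨_,h3,h4⟩⟩)|⟨⟨_,h1,h2⟩,⟨_,h3,h4⟩⟩ <;>
        rw [h1, h3] <;> exact ⟨by simp, h2, h4⟩
    have hdelQ : ∀ p ∈ Q, s(p.1, p.2) ∈ Set.range f := by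
      intro p hp
      obtain ⟨hlt, h2, h4⟩ := hmemQ p hp
      exact hdel p.1 p.2 (fun h => by rw [h] at hlt; omega) (h2.trans h4.symm)
    set w : (Fin r ⊕ Fin s ⊕ Fin t) × (Fin r ⊕ Fin s ⊕ Fin t) → (Fin r ⊕ Fin s ⊕ Fin t) :=
      fun p => if h : s(p.1, p.2) ∈ Set.range f then h.choose else p.1 with hw
    have hwspec : ∀ p ∈ Q, f (w p) = s(p.1, p.2) ∧ (w p = p.1 ∨ w p = p.2) := by
      intro p hp
      have h := hdelQ p hp
      have : w p = h.choose := by rw [hw]; simp [h]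
      rw [this]
      refine ⟨h.choose_spec, ?_⟩
      have hm := (hf h.choose).2
      rw [h.choose_spec] at hm
      rwa [Sym2.mem_iff] at hm
    have hcard : Q.card ≤ (univ.filter (fun v => c v = ε)).card := by
      apply Finset.card_le_card_of_injOn w
      · intro p hp
        obtain ⟨hlt, h2, h4⟩ := hmemQ p hp
        rcases (hwspec p hp).2 with h | h <;> rw [h] <;> simp [h2, h4]
      · intro p hp q hq hwe
        have hp1 := (hwspec p hp).1
        have hq1 := (hwspec q hq).1
        rw [hwe, hq1] at hp1
        rw [Sym2.eq_iff] at hp1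
        rcases hp1 with ⟨e1, e2⟩ | ⟨e1, e2⟩
        · exact Prod.ext e1.symm e2.symm
        · exfalso
          have l1 := (hmemQ p hp).1
          have l2 := (hmemQ q hq).1
          rw [e1, e2] at l2
          omega
    have hQcard : Q.card = n 0 ε * n 1 ε + n 0 ε * n 2 ε + n 1 ε * n 2 ε := by
      have d12 : Disjoint (A 1 ε) (A 2 ε) := by
        rw [Finset.disjoint_left]; intro v hv1 hv2
        simp only [hA, mem_filter] at hv1 hv2
        rw [hv1.2.1] at hv2; exact absurd hv2.2.1 (by decide)
      have d1 : Disjoint (A 0 ε ×ˢ A 1 ε) (A 0 ε ×ˢ A 2 ε) := by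
        rw [Finset.disjoint_left]; rintro ⟨u, v⟩ hv1 hv2
        rw [mem_product] at hv1 hv2
        exact Finset.disjoint_left.1 d12 hv1.2 hv2.2
      have d2 : Disjoint ((A 0 ε ×ˢ A 1 ε) ∪ (A 0 ε ×ˢ A 2 ε)) (A 1 ε ×ˢ A 2 ε) := by
        rw [Finset.disjoint_left]; rintro ⟨u, v⟩ hv1 hv2
        rw [mem_union, mem_product, mem_product] at hv1
        rw [mem_product] at hv2
        have d01 : Disjoint (A 0 ε) (A 1 ε) := by
          rw [Finset.disjoint_left]; intro x hx1 hx2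
          simp only [hA, mem_filter] at hx1 hx2
          rw [hx1.2.1] at hx2; exact absurd hx2.2.1 (by decide)
        rcases hv1 with h | h
        · exact Finset.disjoint_left.1 d01 h.1 hv2.1
        · exact Finset.disjoint_left.1 d01 h.1 hv2.1
      rw [hQ, Finset.card_union_of_disjoint d2, Finset.card_union_of_disjoint d1]
      simp [Finset.card_product, hn]
    have hVcard : (univ.filter (fun v => c v = ε)).card = n 0 ε + n 1 ε + n 2 ε := by
      have : univ.filter (fun v => c v = ε) = (A 0 ε ∪ A 1 ε) ∪ A 2 ε := by
        ext v
        simp only [hA, mem_union, mem_filter, mem_univ, true_and]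
        rcases part_triple v with h | h | h <;> simp [h]
      rw [this, Finset.card_union_of_disjoint, Finset.card_union_of_disjoint]
      · rw [Finset.disjoint_left]; intro x hx1 hx2
        simp only [hA, mem_filter] at hx1 hx2
        rw [hx1.2.1] at hx2; exact absurd hx2.2.1 (by decide)
      · rw [Finset.disjoint_left]; intro x hx1 hx2
        rw [mem_union] at hx1
        simp only [hA, mem_filter] at hx1 hx2
        rcases hx1 with h | h <;> rw [h.2.1] at hx2 <;> exact absurd hx2.2.1 (by decide)
    rw [hQcard, hVcard] at hcard
    exact hcard
  -- part sizes
  have hpart : ∀ (i : Fin 3) (x y z : Fin r ⊕ Fin s ⊕ Fin t), x ≠ y → x ≠ z → y ≠ z →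
      partIdx x = i → partIdx y = i → partIdx z = i → 3 ≤ n i 0 + n i 1 := by
    intro i x y z hxy hxz hyz hx hy hz
    have hsub : {x, y, z} ⊆ A i 0 ∪ A i 1 := by
      intro v hv
      have hc2 : c v = 0 ∨ c v = 1 := by omega
      simp only [mem_insert, mem_singleton] at hv
      rcases hv with h | h | h <;> subst h <;>
        simp only [hA, mem_union, mem_filter, mem_univ, true_and] <;>
        rcases hc2 with h | h <;> simp [h, hx, hy, hz]
    have hcard3 : ({x, y, z} : Finset _).card = 3 := by
      rw [Finset.card_insert_of_notMem (by simp [hxy, hxz]),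
        Finset.card_insert_of_notMem (by simp [hyz]), Finset.card_singleton]
    have := Finset.card_le_card hsub
    rw [hcard3] at this
    have hd : Disjoint (A i 0) (A i 1) := by
      rw [Finset.disjoint_left]; intro v hv1 hv2
      simp only [hA, mem_filter] at hv1 hv2
      rw [hv1.2.2] at hv2; exact absurd hv2.2.2 (by decide)
    rw [Finset.card_union_of_disjoint hd] at this
    exact this
  have h0 := hpart 0 (Sum.inl ⟨0, by omega⟩) (Sum.inl ⟨1, by omega⟩) (Sum.inl ⟨2, by omega⟩)
    (by simp [Fin.ext_iff]) (by simp [Fin.ext_iff]) (by simp [Fin.ext_iff]) rfl rfl rfl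
  have h1 := hpart 1 (Sum.inr (Sum.inl ⟨0, by omega⟩)) (Sum.inr (Sum.inl ⟨1, by omega⟩))
    (Sum.inr (Sum.inl ⟨2, by omega⟩))
    (by simp [Fin.ext_iff]) (by simp [Fin.ext_iff]) (by simp [Fin.ext_iff]) rfl rfl rfl
  have h2 := hpart 2 (Sum.inr (Sum.inr ⟨0, by omega⟩)) (Sum.inr (Sum.inr ⟨1, by omega⟩))
    (Sum.inr (Sum.inr ⟨2, by omega⟩))
    (by simp [Fin.ext_iff]) (by simp [Fin.ext_iff]) (by simp [Fin.ext_iff]) rfl rfl rfl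
  exact arith h0 h1 h2 (keyQ 0) (keyQ 1)

lemma sym2_ne {α : Type} {x y z w : α} (h1 : x = z → y ≠ w) (h2 : x = w → y ≠ z) :
    s(x,y) ≠ s(z,w) := by
  intro h
  rw [Sym2.eq_iff] at h
  rcases h with ⟨e1, e2⟩ | ⟨e1, e2⟩
  · exact h1 e1 e2
  · exact h2 e1 e2

lemma exists_surviving_edge {r s t : ℕ} (hr : 1 ≤ r) (hs : 1 ≤ s) (ht : 2 ≤ t)
    {f : (Fin r ⊕ Fin s ⊕ Fin t) → Sym2 (Fin r ⊕ Fin s ⊕ Fin t)}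
    (hf : OneSelection (K3part r s t) f) :
    ∃ u v, ((K3part r s t).deleteEdges (Set.range f)).Adj u v := by
  by_contra h
  push_neg at h
  have hdel : ∀ u v : Fin r ⊕ Fin s ⊕ Fin t, partIdx u ≠ partIdx v →
      s(u,v) ∈ Set.range f := by
    intro u v hp
    by_contra hmem
    exact h u v (by rw [SimpleGraph.deleteEdges_adj]; exact ⟨(K3part_adj u v).2 hp, hmem⟩)
  set a : Fin r ⊕ Fin s ⊕ Fin t := Sum.inl ⟨0, by omega⟩ with ha
  set b : Fin r ⊕ Fin s ⊕ Fin t := Sum.inr (Sum.inl ⟨0, by omega⟩) with hb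
  set c0 : Fin r ⊕ Fin s ⊕ Fin t := Sum.inr (Sum.inr ⟨0, by omega⟩) with hc0
  set c1 : Fin r ⊕ Fin s ⊕ Fin t := Sum.inr (Sum.inr ⟨1, by omega⟩) with hc1
  have nab : a ≠ b := by rw [ha, hb]; simp
  have nac0 : a ≠ c0 := by rw [ha, hc0]; simp
  have nac1 : a ≠ c1 := by rw [ha, hc1]; simp
  have nbc0 : b ≠ c0 := by rw [hb, hc0]; simp
  have nbc1 : b ≠ c1 := by rw [hb, hc1]; simp
  have nc01 : c0 ≠ c1 := by rw [hc0, hc1]; simp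
  obtain ⟨v1, hv1⟩ := hdel a b (by rw [ha, hb]; simp [partIdx])
  obtain ⟨v2, hv2⟩ := hdel a c0 (by rw [ha, hc0]; simp [partIdx])
  obtain ⟨v3, hv3⟩ := hdel a c1 (by rw [ha, hc1]; simp [partIdx])
  obtain ⟨v4, hv4⟩ := hdel b c0 (by rw [hb, hc0]; simp [partIdx])
  obtain ⟨v5, hv5⟩ := hdel b c1 (by rw [hb, hc1]; simp [partIdx])
  have m1 : v1 = a ∨ v1 = b := by
    have := (hf v1).2; rw [hv1] at this; rwa [Sym2.mem_iff] at this
  have m2 : v2 = a ∨ v2 = c0 := by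
    have := (hf v2).2; rw [hv2] at this; rwa [Sym2.mem_iff] at this
  have m3 : v3 = a ∨ v3 = c1 := by
    have := (hf v3).2; rw [hv3] at this; rwa [Sym2.mem_iff] at this
  have m4 : v4 = b ∨ v4 = c0 := by
    have := (hf v4).2; rw [hv4] at this; rwa [Sym2.mem_iff] at this
  have m5 : v5 = b ∨ v5 = c1 := by
    have := (hf v5).2; rw [hv5] at this; rwa [Sym2.mem_iff] at this
  -- distinctness of relevant edges
  have D1 : s(a,c0) ≠ s(b,c0) := sym2_ne (fun e _ => nab e) (fun e => (nac0 e).elim)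
  have D2 : s(b,c0) ≠ s(b,c1) := sym2_ne (fun _ e => nc01 e) (fun e => (nbc1 e).elim)
  have D3 : s(a,c1) ≠ s(b,c1) := sym2_ne (fun e _ => nab e) (fun e => (nac1 e).elim)
  have D4 : s(a,b) ≠ s(a,c1) := sym2_ne (fun _ e => nbc1 e) (fun e => (nac1 e).elim)
  have D5 : s(a,b) ≠ s(b,c0) := sym2_ne (fun e => (nab e).elim) (fun e => (nac0 e).elim)
  have D6 : s(a,c0) ≠ s(a,c1) := sym2_ne (fun _ e => nc01 e) (fun e => (nac1 e).elim)
  have D8 : s(a,b) ≠ s(b,c1) := sym2_ne (fun e => (nab e).elim) (fun e => (nac1 e).elim)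
  have D7 : s(a,b) ≠ s(a,c0) := sym2_ne (fun _ e => nbc0 e) (fun e => (nac0 e).elim)
  rcases m2 with e2 | e2
  · -- f a = s(a,c0)
    rw [e2] at hv2
    rcases m3 with e3 | e3
    · rw [e3] at hv3; exact D6 (hv2.symm.trans hv3)
    · rw [e3] at hv3
      rcases m5 with e5 | e5
      · rw [e5] at hv5
        rcases m1 with e1 | e1
        · rw [e1] at hv1; exact D7 (hv1.symm.trans hv2)
        · rw [e1] at hv1; exact D8 (hv1.symm.trans hv5)
      · rw [e5] at hv5; exact D3 (hv3.symm.trans hv5)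
  · -- f c0 = s(a,c0)
    rw [e2] at hv2
    rcases m4 with e4 | e4
    · rw [e4] at hv4
      rcases m5 with e5 | e5
      · rw [e5] at hv5; exact D2 (hv4.symm.trans hv5)
      · rw [e5] at hv5
        rcases m3 with e3 | e3
        · rw [e3] at hv3
          rcases m1 with e1 | e1
          · rw [e1] at hv1; exact D4 (hv1.symm.trans hv3)
          · rw [e1] at hv1; exact D5 (hv1.symm.trans hv4)
        · rw [e3] at hv3; exact D3 (hv3.symm.trans hv5)
    · rw [e4] at hv4; exact D1 (hv2.symm.trans hv4)

/-- For `1 ≤ r ≤ s ≤ t` with `t ≥ 2`: `χ₁(K_{r,s,t}) = 2` if `r ≤ 2`, and `= 3` if `r ≥ 3`. -/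
theorem robustChrom_tripartite (r s t : ℕ) (hr : 1 ≤ r) (hrs : r ≤ s) (hst : s ≤ t)
    (ht : 2 ≤ t) :
    (r ≤ 2 → robustChrom (K3part r s t) = 2) ∧
    (3 ≤ r → robustChrom (K3part r s t) = 3) := by
  classical
  have hs1 : 1 ≤ s := le_trans hr hrs
  have ht1 : 1 ≤ t := le_trans hs1 hst
  -- generic facts ----------------------------------------------------------
  -- lower bound 2 for every selection
  have low2 : (2 : ℕ∞) ≤ robustChrom (K3part r s t) := by
    apply le_iInf
    rintro ⟨f, hf⟩
    obtain ⟨u, v, huv⟩ := exists_surviving_edge hr hs1 ht hf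
    have hnc : ¬ ((K3part r s t).deleteEdges (Set.range f)).Colorable 1 := by
      rintro ⟨C⟩
      exact C.valid huv (Subsingleton.elim _ _)
    have hle : ¬ ((K3part r s t).deleteEdges (Set.range f)).chromaticNumber ≤ (1 : ℕ) := by
      rw [SimpleGraph.chromaticNumber_le_iff_colorable]
      exact hnc
    have := Order.add_one_le_of_lt (not_le.mp hle)
    simpa [one_add_one_eq_two] using this
  constructor
  · -- r ≤ 2 : equals 2
    intro hr2
    refine le_antisymm ?_ low2
    -- the special selection
    set a1 : Fin r ⊕ Fin s ⊕ Fin t := Sum.inl ⟨0, by omega⟩ with ha1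
    set a2 : Fin r ⊕ Fin s ⊕ Fin t := Sum.inl ⟨r - 1, by omega⟩ with ha2
    set fsel : (Fin r ⊕ Fin s ⊕ Fin t) → Sym2 (Fin r ⊕ Fin s ⊕ Fin t) := fun v =>
      match v with
      | Sum.inl a => s(Sum.inl a, Sum.inr (Sum.inr ⟨0, by omega⟩))
      | Sum.inr (Sum.inl b) => s(a1, Sum.inr (Sum.inl b))
      | Sum.inr (Sum.inr cc) => s(a2, Sum.inr (Sum.inr cc)) with hfsel
    have hsel : OneSelection (K3part r s t) fsel := by
      rintro (a | b | cc) <;>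
        refine ⟨(SimpleGraph.mem_edgeSet _).2 ((K3part_adj _ _).2 (by simp [ha1, ha2, partIdx])), ?_⟩ <;>
        simp [hfsel, ha1, ha2, Sym2.mem_iff]
    have hcol : ((K3part r s t).deleteEdges (Set.range fsel)).Colorable 2 := by
      refine ⟨SimpleGraph.Coloring.mk
        (fun v => match v with
          | Sum.inl a => if (a : ℕ) = 0 then 0 else 1
          | Sum.inr (Sum.inl _) => 0
          | Sum.inr (Sum.inr _) => 1) ?_⟩
      rintro (a | b | cc) (a' | b' | cc') hadj <;>
        rw [SimpleGraph.deleteEdges_adj] at hadj <;> obtain ⟨hK, hnr⟩ := hadj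
      · rw [K3part_adj] at hK; simp [partIdx] at hK
      · -- inl a -- inr inl b'
        simp only []
        intro hgeq
        split_ifs at hgeq with h0
        · have haa : (Sum.inl a : Fin r ⊕ Fin s ⊕ Fin t) = a1 := by
            rw [ha1]; exact congrArg Sum.inl (Fin.ext h0)
          exact hnr ⟨Sum.inr (Sum.inl b'), by simp only [hfsel]; rw [← haa]⟩
        · exact absurd hgeq (by norm_num)
      · -- inl a -- inr inr cc'
        simp only []
        intro hgeq
        split_ifs at hgeq with h0
        · exact absurd hgeq (by norm_num)
        · have hval : (a : ℕ) = r - 1 := by have := a.isLt; omega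
          have haa : (Sum.inl a : Fin r ⊕ Fin s ⊕ Fin t) = a2 := by
            rw [ha2]; exact congrArg Sum.inl (Fin.ext hval)
          exact hnr ⟨Sum.inr (Sum.inr cc'), by simp only [hfsel]; rw [← haa]⟩
      · -- inr inl b -- inl a'
        simp only []
        intro hgeq
        split_ifs at hgeq with h0
        · have haa : (Sum.inl a' : Fin r ⊕ Fin s ⊕ Fin t) = a1 := by
            rw [ha1]; exact congrArg Sum.inl (Fin.ext h0)
          refine hnr ⟨Sum.inr (Sum.inl b), ?_⟩
          simp only [hfsel]; rw [← haa]; exact Sym2.eq_swap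
        · exact absurd hgeq (by norm_num)
      · rw [K3part_adj] at hK; simp [partIdx] at hK
      · simp
      · -- inr inr cc -- inl a'
        simp only []
        intro hgeq
        split_ifs at hgeq with h0
        · exact absurd hgeq (by norm_num)
        · have hval : (a' : ℕ) = r - 1 := by have := a'.isLt; omega
          have haa : (Sum.inl a' : Fin r ⊕ Fin s ⊕ Fin t) = a2 := by
            rw [ha2]; exact congrArg Sum.inl (Fin.ext hval)
          refine hnr ⟨Sum.inr (Sum.inr cc), ?_⟩
          simp only [hfsel]; rw [← haa]; exact Sym2.eq_swap
      · simp
      · rw [K3part_adj] at hK; simp [partIdx] at hK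
    refine iInf_le_of_le ⟨fsel, hsel⟩ ?_
    have := hcol.chromaticNumber_le
    simpa using this
  · -- r ≥ 3 : equals 3
    intro hr3
    have hs3 : 3 ≤ s := le_trans hr3 hrs
    have ht3 : 3 ≤ t := le_trans hs3 hst
    refine le_antisymm ?_ ?_
    · -- upper bound 3 via an arbitrary selection
      set fdef : (Fin r ⊕ Fin s ⊕ Fin t) → Sym2 (Fin r ⊕ Fin s ⊕ Fin t) := fun v =>
        match v with
        | Sum.inl a => s(Sum.inl a, Sum.inr (Sum.inl ⟨0, by omega⟩))
        | Sum.inr (Sum.inl b) => s(Sum.inl ⟨0, by omega⟩, Sum.inr (Sum.inl b))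
        | Sum.inr (Sum.inr cc) => s(Sum.inl ⟨0, by omega⟩, Sum.inr (Sum.inr cc)) with hfdef
      have hsel : OneSelection (K3part r s t) fdef := by
        rintro (a | b | cc) <;>
          refine ⟨(SimpleGraph.mem_edgeSet _).2 ((K3part_adj _ _).2 (by simp [partIdx])), ?_⟩ <;>
          simp [hfdef, Sym2.mem_iff]
      have hcol : ((K3part r s t).deleteEdges (Set.range fdef)).Colorable 3 := by
        refine ⟨SimpleGraph.Coloring.mk partIdx ?_⟩
        intro u v hadj
        rw [SimpleGraph.deleteEdges_adj] at hadj
        exact (K3part_adj u v).1 hadj.1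
      refine iInf_le_of_le ⟨fdef, hsel⟩ ?_
      have := hcol.chromaticNumber_le
      simpa using this
    · -- lower bound 3
      apply le_iInf
      rintro ⟨f, hf⟩
      have hnc : ¬ ((K3part r s t).deleteEdges (Set.range f)).Colorable 2 := by
        rintro ⟨C⟩
        exact no_two_coloring hr3 hs3 ht3 hf C
      have hle : ¬ ((K3part r s t).deleteEdges (Set.range f)).chromaticNumber ≤ (2 : ℕ) := by
        rw [SimpleGraph.chromaticNumber_le_iff_colorable]
        exact hnc
      have := Order.add_one_le_of_lt (not_le.mp hle)
      simpa [two_add_one_eq_three] using this
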